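/- For a random binary phase function applied blockwise: let m ≥ 2 and for tuples x, x̃ of k strings over m patches with x locally distinct (pairwise distinct on each patch), the two-layer blocked phase twirl Π_a δ(x̃_{a,a+1}, x_{a,a+1} stabilizations) equals the global phase twirl δ(x̃, x stabilizations) on the locally distinct subspace; both equal Σ_{π ∈ S_k} δ_{x̃ = πx}. -/

import Mathlib

/-- If `x` is injective and counts agree mod 2 pointwise, then `xt` is a permutation of `x`. -/
lemma key_perm {β : Type*} [DecidableEq β] {k : ℕ} (x xt : Fin k → β)
    (hx : Function.Injective x)
    (h : ∀ z : β, (Finset.univ.filter fun j => xt j = z).card % 2 =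
        (Finset.univ.filter fun j => x j = z).card % 2) :
    ∃ π : Equiv.Perm (Fin k), ∀ j, xt j = x (π j) := by
  have hsur : ∀ j : Fin k, ∃ i, xt i = x j := by
    intro j
    have hx1 : (Finset.univ.filter fun i => x i = x j) = {j} := by
      ext i
      simp only [Finset.mem_filter, Finset.mem_univ, true_and, Finset.mem_singleton]
      exact ⟨fun hij => hx hij, fun hij => by rw [hij]⟩
    have := h (x j)
    rw [hx1] at this
    simp only [Finset.card_singleton] at this
    have hne : (Finset.univ.filter fun i => xt i = x j).card ≠ 0 := by omega
    obtain ⟨i, hi⟩ := Finset.card_ne_zero.mp hne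
    exact ⟨i, (Finset.mem_filter.mp hi).2⟩
  choose g hg using hsur
  have hginj : Function.Injective g := by
    intro a b hab
    apply hx
    rw [← hg a, ← hg b, hab]
  have hgbij : Function.Bijective g := Finite.injective_iff_bijective.mp hginj
  let e := Equiv.ofBijective g hgbij
  refine ⟨e.symm, fun j => ?_⟩
  have : xt (e (e.symm j)) = x (e.symm j) := hg (e.symm j)
  rwa [Equiv.apply_symm_apply] at this

lemma easy_count {β : Type*} [DecidableEq β] {k : ℕ} (x xt : Fin k → β)
    (π : Equiv.Perm (Fin k)) (hπ : ∀ j, xt j = x (π j)) (z : β) :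
    (Finset.univ.filter fun j => xt j = z).card =
      (Finset.univ.filter fun j => x j = z).card := by
  apply Finset.card_bij' (fun j _ => π j) (fun j _ => π.symm j)
  · intro a ha
    simp only [Finset.mem_filter, Finset.mem_univ, true_and] at ha ⊢
    rw [← hπ a]; exact ha
  · intro a ha
    simp only [Finset.mem_filter, Finset.mem_univ, true_and] at ha ⊢
    rw [hπ (π.symm a), Equiv.apply_symm_apply]; exact ha
  · intro a _; exact π.symm_apply_apply a
  · intro a _; exact π.apply_symm_apply a

theorem stmt_18 {α : Type*} [DecidableEq α] (k m : ℕ) (hm : 2 ≤ m)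
    (x xt : Fin k → Fin m → α)
    (hdist : ∀ a : Fin m, Function.Injective fun j => x j a) :
    ((∀ (a : ℕ) (ha : a + 1 < m), ∀ z : α × α,
        (Finset.univ.filter fun j : Fin k =>
            (xt j ⟨a, by omega⟩, xt j ⟨a + 1, ha⟩) = z).card % 2 =
        (Finset.univ.filter fun j : Fin k =>
            (x j ⟨a, by omega⟩, x j ⟨a + 1, ha⟩) = z).card % 2) ↔
      ∃ π : Equiv.Perm (Fin k), ∀ j, xt j = x (π j)) ∧
    ((∀ z : Fin m → α,
        (Finset.univ.filter fun j : Fin k => xt j = z).card % 2 =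
        (Finset.univ.filter fun j : Fin k => x j = z).card % 2) ↔
      ∃ π : Equiv.Perm (Fin k), ∀ j, xt j = x (π j)) := by
  constructor
  · constructor
    · intro h
      -- for each window, get a permutation
      have H : ∀ (a : ℕ) (ha : a + 1 < m), ∃ π : Equiv.Perm (Fin k), ∀ j,
          (xt j ⟨a, by omega⟩, xt j ⟨a + 1, ha⟩) =
          (x (π j) ⟨a, by omega⟩, x (π j) ⟨a + 1, ha⟩) := by
        intro a ha
        apply key_perm (fun j => (x j ⟨a, by omega⟩, x j ⟨a + 1, ha⟩))
          (fun j => (xt j ⟨a, by omega⟩, xt j ⟨a + 1, ha⟩))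
        · intro i j hij
          exact hdist ⟨a, by omega⟩ (congrArg Prod.fst hij)
        · exact h a ha
      choose f hf using H
      have h0 : (0 : ℕ) + 1 < m := by omega
      -- all window permutations agree
      have hagree : ∀ (a : ℕ) (ha : a + 1 < m) (j : Fin k), f a ha j = f 0 h0 j := by
        intro a
        induction a with
        | zero => intro ha j; rfl
        | succ n ih =>
          intro ha j
          have hn : n + 1 < m := by omega
          have e1 : xt j ⟨n + 1, hn⟩ = x (f n hn j) ⟨n + 1, hn⟩ :=
            congrArg Prod.snd (hf n hn j)
          have e2 : xt j ⟨n + 1, by omega⟩ = x (f (n+1) ha j) ⟨n + 1, by omega⟩ :=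
            congrArg Prod.fst (hf (n+1) ha j)
          have : x (f (n+1) ha j) ⟨n + 1, hn⟩ = x (f n hn j) ⟨n + 1, hn⟩ := by
            rw [← e1]; exact e2.symm
          have := hdist ⟨n + 1, hn⟩ this
          rw [this, ih hn j]
      refine ⟨f 0 h0, fun j => ?_⟩
      funext b
      rcases b with ⟨bv, hb⟩
      rcases Nat.lt_or_ge (bv + 1) m with hlt | hge
      · have e1 : xt j ⟨bv, by omega⟩ = x (f bv hlt j) ⟨bv, by omega⟩ :=
          congrArg Prod.fst (hf bv hlt j)
        rw [e1, hagree bv hlt j]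
      · -- bv = m - 1, use window bv - 1
        have hbv : 1 ≤ bv := by omega
        have hw : (bv - 1) + 1 < m := by omega
        have e1 : xt j ⟨(bv - 1) + 1, hw⟩ = x (f (bv-1) hw j) ⟨(bv - 1) + 1, hw⟩ :=
          congrArg Prod.snd (hf (bv-1) hw j)
        have hbeq : ((bv - 1) + 1 : ℕ) = bv := by omega
        have : (⟨(bv - 1) + 1, hw⟩ : Fin m) = ⟨bv, hb⟩ := by
          simp [hbeq]
        rw [this] at e1
        rw [e1, hagree (bv-1) hw j]
    · intro ⟨π, hπ⟩ a ha z
      rw [easy_count (fun j => (x j ⟨a, by omega⟩, x j ⟨a + 1, ha⟩))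
        (fun j => (xt j ⟨a, by omega⟩, xt j ⟨a + 1, ha⟩)) π (fun j => by rw [hπ j]) z]
  · constructor
    · intro h
      apply key_perm x xt _ h
      intro i j hij
      exact hdist ⟨0, by omega⟩ (congrFun hij ⟨0, by omega⟩)
    · intro ⟨π, hπ⟩ z
      rw [easy_count x xt π hπ z]
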